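/- Let X be a simplicial complex on n vertices and k \geq 0. Define the matrix P indexed by X(k) with P(\sigma,\sigma) = \sum_{v \in \sigma} deg_{G_X}(v) - deg_X(\sigma), P(\sigma,\tau) = -(\sigma:\sigma\cap\tau)(\tau:\sigma\cap\tau) if \sigma \sim_1 \tau, and 0 otherwise. Then the largest eigenvalue of P is at most kn + max_{\sigma \in X(k)} \sum_{j=0}^{k+1} (j+1)|\sigma[j]|. -/

import Mathlib

open Finset Matrix BigOperators

noncomputable section

/-- An abstract simplicial complex on the vertex set `Fin n`
(faces are finite sets of vertices, closed under taking subsets,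
containing the empty face). -/
structure SC (n : ℕ) where
  faces : Finset (Finset (Fin n))
  empty_mem : ∅ ∈ faces
  down_closed : ∀ ⦃σ⦄, σ ∈ faces → ∀ ⦃τ : Finset (Fin n)⦄, τ ⊆ σ → τ ∈ faces

namespace SC

variable {n : ℕ}

/-- the faces with exactly `k` vertices, i.e. the faces of dimension `k-1`;
so `X.face (k+1)` plays the role of `X(k)` in the paper. -/
abbrev face (X : SC n) (k : ℕ) : Type := {σ : Finset (Fin n) // σ ∈ X.faces ∧ σ.card = k}

/-- the incidence sign `(τ:σ) = (-1)^{#{v ∈ τ : v < u}}`, `u` the unique vertex of `τ \ σ`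
(meaningful when `σ ⊂ τ` with `|τ \ σ| = 1`). -/
def iSgn (σ τ : Finset (Fin n)) : ℝ :=
  ∑ u ∈ τ \ σ, (-1 : ℝ) ^ (τ.filter (fun v => v < u)).card

/-- the boundary matrix from `(k+1)`-element faces to `k`-element faces
(i.e. `∂_k` of the paper, in the paper's dimension indexing). -/
def bdry (X : SC n) (k : ℕ) : Matrix (X.face k) (X.face (k+1)) ℝ :=
  Matrix.of fun σ τ => if σ.1 ⊆ τ.1 then iSgn σ.1 τ.1 else 0

/-- the `k`-dimensional combinatorial Laplacian `L_k(X)`,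
indexed by faces with `k+1` vertices. -/
def lap (X : SC n) (k : ℕ) : Matrix (X.face (k+1)) (X.face (k+1)) ℝ :=
  X.bdry (k+1) * (X.bdry (k+1))ᴴ + (X.bdry k)ᴴ * X.bdry k

/-- degree of the vertex `u` in the 1-skeleton graph `G_X`. -/
def gdeg (X : SC n) (u : Fin n) : ℕ :=
  (Finset.univ.filter (fun v => v ≠ u ∧ insert u {v} ∈ X.faces)).card

/-- the graph Laplacian `L(G_X)` of the 1-skeleton `G_X`. -/
def glap (X : SC n) : Matrix (Fin n) (Fin n) ℝ :=
  Matrix.of fun u v =>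
    if u = v then (X.gdeg u : ℝ) else if insert u {v} ∈ X.faces then -1 else 0

/-- degree of a face: the number of faces of `X` with one more vertex containing it. -/
def fdeg (X : SC n) (σ : Finset (Fin n)) : ℕ :=
  (X.faces.filter (fun τ => τ.card = σ.card + 1 ∧ σ ⊆ τ)).card

/-- the vertex `u` belongs to the link of `σ` in `X`. -/
def vLk (X : SC n) (u : Fin n) (σ : Finset (Fin n)) : Prop :=
  u ∉ σ ∧ insert u σ ∈ X.faces

instance (X : SC n) (u : Fin n) (σ : Finset (Fin n)) : Decidable (X.vLk u σ) := by
  unfold vLk; infer_instance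

/-- the set `σ[j]`: vertices `u ∉ lk_X(σ)` with `u ∈ lk_X(v)` for all `v ∈ σ` and
`|{w ∈ σ : u ∈ lk_X(σ \ {w})}| = j`. -/
def dset (X : SC n) (σ : Finset (Fin n)) (j : ℕ) : Finset (Fin n) :=
  Finset.univ.filter (fun u => ¬ X.vLk u σ ∧ (∀ v ∈ σ, X.vLk u {v}) ∧
    (σ.filter (fun w => X.vLk u (σ.erase w))).card = j)

/-- `X.nonface k` is the set of `k`-element vertex subsets that are not faces;
so `X.nonface (k+1)` is `\overline{X(k)}` of the paper. -/
def nonface (X : SC n) (k : ℕ) : Finset (Finset (Fin n)) :=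
  (Finset.powersetCard k (Finset.univ : Finset (Fin n))).filter (fun σ => σ ∉ X.faces)

end SC

/-- the all-ones matrix `J`. -/
def Jmat (n : ℕ) : Matrix (Fin n) (Fin n) ℝ := Matrix.of fun _ _ => 1

open scoped Classical in
/-- the eigenvalues of a real symmetric matrix, sorted increasingly (junk `[]` otherwise). -/
def eigList {m : Type*} [Fintype m] [DecidableEq m] (A : Matrix m m ℝ) : List ℝ :=
  if h : A.IsHermitian then (Finset.univ.val.map h.eigenvalues).sort (· ≤ ·) else []

/-- `λ_i(A)`: the `i`-th smallest eigenvalue (1-based). -/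
def ithEig {m : Type*} [Fintype m] [DecidableEq m] (A : Matrix m m ℝ) (i : ℕ) : ℝ :=
  (eigList A).getD (i - 1) 0

/-- `S_{k,i}(A)`: the `i`-th smallest (1-based) element of the multiset of sums of `k`
eigenvalues `∑_{j ∈ A} λ_j(A)` over all `k`-element index subsets. -/
def Ssum {n : ℕ} (A : Matrix (Fin n) (Fin n) ℝ) (k i : ℕ) : ℝ :=
  ((((Finset.univ : Finset (Fin n)).powersetCard k).val.map
      (fun S : Finset (Fin n) => ∑ j ∈ S, (eigList A).getD (j : ℕ) 0)).sort (· ≤ ·)).getD (i - 1) 0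

/-- `max_{σ ∈ X(k)} ∑_{j=0}^{k+1} (j+1)|σ[j]|`. -/
def maxD {n : ℕ} (X : SC n) (k : ℕ) : ℕ :=
  Finset.univ.sup fun σ : X.face (k+1) =>
    ∑ j ∈ Finset.range (k+2), (j+1) * (X.dset σ.1 j).card

/-- the matrix `P` of the decomposition `L_k(X) = Q - P`. -/
def Pmat {n : ℕ} (X : SC n) (k : ℕ) : Matrix (X.face (k+1)) (X.face (k+1)) ℝ :=
  Matrix.of fun σ τ =>
    if σ = τ then (∑ v ∈ σ.1, (X.gdeg v : ℝ)) - (X.fdeg σ.1 : ℝ)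
    else if (σ.1 ∩ τ.1).card = k ∧ σ.1 ∪ τ.1 ∉ X.faces ∧ (σ.1 \ τ.1) ∪ (τ.1 \ σ.1) ∈ X.faces then
      -(SC.iSgn (σ.1 ∩ τ.1) σ.1 * SC.iSgn (σ.1 ∩ τ.1) τ.1)
    else 0

/-- the matrix `Q` of the decomposition `L_k(X) = Q - P`. -/
def Qmat {n : ℕ} (X : SC n) (k : ℕ) : Matrix (X.face (k+1)) (X.face (k+1)) ℝ :=
  Matrix.of fun σ τ =>
    if σ = τ then (∑ v ∈ σ.1, (X.gdeg v : ℝ)) + (k : ℝ) + 1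
    else if (σ.1 ∩ τ.1).card = k ∧ σ.1 ∪ τ.1 ∉ X.faces ∧ (σ.1 \ τ.1) ∪ (τ.1 \ σ.1) ∉ X.faces then
      SC.iSgn (σ.1 ∩ τ.1) σ.1 * SC.iSgn (σ.1 ∩ τ.1) τ.1
    else 0

/-- incidence sign with values in an arbitrary field. -/
def iSgnF {F : Type*} [Field F] {n : ℕ} (σ τ : Finset (Fin n)) : F :=
  ∑ u ∈ τ \ σ, (-1 : F) ^ (τ.filter (fun v => v < u)).card

/-- the `k`-th additive compound matrix `M^{[k]}`, indexed by `k`-element subsets of `Fin n`. -/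
def addCompound {F : Type*} [Field F] {n : ℕ} (M : Matrix (Fin n) (Fin n) F) (k : ℕ) :
    Matrix {S : Finset (Fin n) // S.card = k} {S : Finset (Fin n) // S.card = k} F :=
  Matrix.of fun σ τ =>
    if σ = τ then ∑ i ∈ σ.1, M i i
    else if (σ.1 ∩ τ.1).card = k - 1 then
      (iSgnF (σ.1 ∩ τ.1) σ.1 * iSgnF (σ.1 ∩ τ.1) τ.1) *
        ∑ i ∈ σ.1 \ τ.1, ∑ j ∈ τ.1 \ σ.1, M i j
    else 0

end

namespace Stmt5Aux

open SC

lemma spec_to_eig {m : Type*} [Fintype m] [DecidableEq m] {A : Matrix m m ℝ} {μ : ℝ}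
    (h : μ ∈ spectrum ℝ A) : Module.End.HasEigenvalue (Matrix.toLin' A) μ := by
  have he : Matrix.toLinAlgEquiv' A = Matrix.toLin' A := by
    ext v; simp [Matrix.toLinAlgEquiv'_apply, Matrix.toLin'_apply]
  rw [← AlgEquiv.spectrum_eq (Matrix.toLinAlgEquiv' : Matrix m m ℝ ≃ₐ[ℝ] _),
    ← Module.End.hasEigenvalue_iff_mem_spectrum] at h
  rwa [he] at h

variable {n k : ℕ}

/-- vertices adjacent to all of σ but not in the link of σ. -/
def Aset (X : SC n) (σ : Finset (Fin n)) : Finset (Fin n) :=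
  Finset.univ.filter (fun u => ¬ X.vLk u σ ∧ ∀ v ∈ σ, X.vLk u {v})

lemma dset_eq (X : SC n) (σ : Finset (Fin n)) (j : ℕ) :
    X.dset σ j = (Aset X σ).filter
      (fun u => (σ.filter (fun w => X.vLk u (σ.erase w))).card = j) := by
  ext u
  simp [SC.dset, Aset, and_assoc]

lemma Aset_eq_biUnion (X : SC n) {σ : Finset (Fin n)} (hσ : σ.card = k + 1) :
    Aset X σ = (Finset.range (k+2)).biUnion (fun j => X.dset σ j) := by
  ext u
  simp only [Finset.mem_biUnion, Finset.mem_range, dset_eq, Finset.mem_filter]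
  constructor
  · intro hu
    exact ⟨(σ.filter (fun w => X.vLk u (σ.erase w))).card,
      by have := Finset.card_filter_le σ (fun w => X.vLk u (σ.erase w)); omega,
      hu, rfl⟩
  · rintro ⟨j, -, hu, -⟩
    exact hu

lemma dset_disj (X : SC n) (σ : Finset (Fin n)) :
    ∀ x ∈ Finset.range (k+2), ∀ y ∈ Finset.range (k+2), x ≠ y →
      Disjoint (X.dset σ x) (X.dset σ y) := by
  intro x _ y _ hxy
  rw [Finset.disjoint_left]
  intro u hx hy
  rw [dset_eq, Finset.mem_filter] at hx hy
  exact hxy (hx.2 ▸ hy.2 ▸ rfl)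

lemma card_Aset (X : SC n) {σ : Finset (Fin n)} (hσ : σ.card = k + 1) :
    (Aset X σ).card = ∑ j ∈ Finset.range (k+2), (X.dset σ j).card := by
  rw [Aset_eq_biUnion X hσ, Finset.card_biUnion (dset_disj X σ)]

lemma sum_j (X : SC n) {σ : Finset (Fin n)} (hσ : σ.card = k + 1) :
    ∑ u ∈ Aset X σ, (σ.filter (fun w => X.vLk u (σ.erase w))).card
      = ∑ j ∈ Finset.range (k+2), j * (X.dset σ j).card := by
  rw [Aset_eq_biUnion X hσ, Finset.sum_biUnion]
  · refine Finset.sum_congr rfl fun j _ => ?_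
    rw [Finset.sum_congr rfl (fun u hu => ?_), Finset.sum_const, smul_eq_mul, mul_comm]
    rw [dset_eq, Finset.mem_filter] at hu
    exact hu.2
  · intro x hx y hy hxy
    exact dset_disj X σ x hx y hy hxy

/-- the link of σ as a vertex set. -/
def lkset (X : SC n) (σ : Finset (Fin n)) : Finset (Fin n) :=
  Finset.univ.filter (fun u => X.vLk u σ)

lemma card_lk_le_fdeg (X : SC n) (σ : Finset (Fin n)) :
    (lkset X σ).card ≤ X.fdeg σ := by
  unfold SC.fdeg
  refine Finset.card_le_card_of_injOn (fun u => insert u σ) ?_ ?_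
  · intro u hu
    rw [Finset.mem_coe, lkset, Finset.mem_filter] at hu
    obtain ⟨-, hus, hmem⟩ := hu
    refine Finset.mem_filter.2 ⟨hmem, Finset.card_insert_of_notMem hus, Finset.subset_insert _ _⟩
  · intro u hu u' hu' h
    rw [Finset.mem_coe, lkset, Finset.mem_filter] at hu hu'
    have h2 : insert u σ = insert u' σ := h
    have : u ∈ insert u' σ := h2 ▸ Finset.mem_insert_self u σ
    rcases Finset.mem_insert.1 this with h' | h'
    · exact h'
    · exact absurd h' (hu.2 : u ∉ σ ∧ _).1

lemma sum_gdeg_le (X : SC n) {σ : Finset (Fin n)} (hσ : σ.card = k + 1) :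
    ∑ v ∈ σ, X.gdeg v ≤ k * n + (lkset X σ).card + (Aset X σ).card := by
  have hswap : ∑ v ∈ σ, X.gdeg v
      = ∑ w : Fin n, (σ.filter (fun v => w ≠ v ∧ insert v {w} ∈ X.faces)).card := by
    unfold SC.gdeg
    simp only [Finset.card_filter]
    rw [Finset.sum_comm]
  rw [hswap]
  have hbound : ∀ w : Fin n,
      (σ.filter (fun v => w ≠ v ∧ insert v {w} ∈ X.faces)).card
        ≤ k + (if w ∈ lkset X σ ∪ Aset X σ then 1 else 0) := by
    intro w
    by_cases hw : w ∈ lkset X σ ∪ Aset X σ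
    · rw [if_pos hw]
      calc (σ.filter (fun v => w ≠ v ∧ insert v {w} ∈ X.faces)).card
          ≤ σ.card := Finset.card_filter_le _ _
        _ = k + 1 := hσ
    · rw [if_neg hw, add_zero]
      by_contra hlt
      push_neg at hlt
      have hsub : σ.filter (fun v => w ≠ v ∧ insert v {w} ∈ X.faces) ⊆ σ :=
        Finset.filter_subset _ _
      have heq : σ = σ.filter (fun v => w ≠ v ∧ insert v {w} ∈ X.faces) := by
        refine (Finset.eq_of_subset_of_card_le hsub ?_).symm
        omega
      have hall : ∀ v ∈ σ, w ≠ v ∧ insert v {w} ∈ X.faces := by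
        intro v hv
        have := heq ▸ hv
        exact (Finset.mem_filter.1 this).2
      apply hw
      by_cases hlk : X.vLk w σ
      · exact Finset.mem_union_left _ (Finset.mem_filter.2 ⟨Finset.mem_univ _, hlk⟩)
      · refine Finset.mem_union_right _ (Finset.mem_filter.2 ⟨Finset.mem_univ _, hlk, ?_⟩)
        intro v hv
        obtain ⟨hne, hface⟩ := hall v hv
        exact ⟨by simp [hne], by rwa [Finset.pair_comm]⟩
  calc ∑ w : Fin n, (σ.filter (fun v => w ≠ v ∧ insert v {w} ∈ X.faces)).card
      ≤ ∑ w : Fin n, (k + (if w ∈ lkset X σ ∪ Aset X σ then 1 else 0)) :=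
        Finset.sum_le_sum fun w _ => hbound w
    _ = k * n + (lkset X σ ∪ Aset X σ).card := by
        rw [Finset.sum_add_distrib, Finset.sum_const, Finset.card_univ, Fintype.card_fin,
          smul_eq_mul, mul_comm]
        congr 1
        rw [← Finset.card_filter]
        congr 1
        ext w
        simp
    _ ≤ k * n + ((lkset X σ).card + (Aset X σ).card) := by
        have := Finset.card_union_le (lkset X σ) (Aset X σ)
        omega
    _ = k * n + (lkset X σ).card + (Aset X σ).card := by ring

lemma abs_iSgn {σ τ : Finset (Fin n)} (h : (τ \ σ).card = 1) : |SC.iSgn σ τ| = 1 := by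
  obtain ⟨u, hu⟩ := Finset.card_eq_one.1 h
  rw [SC.iSgn, hu, Finset.sum_singleton, abs_pow, abs_neg, abs_one, one_pow]

/-- the set of faces `τ` with `σ ∼₁ τ`. -/
def Tset (X : SC n) (k : ℕ) (σ : X.face (k+1)) : Finset (X.face (k+1)) :=
  Finset.univ.filter (fun τ => τ ≠ σ ∧ (σ.1 ∩ τ.1).card = k ∧ σ.1 ∪ τ.1 ∉ X.faces ∧
    (σ.1 \ τ.1) ∪ (τ.1 \ σ.1) ∈ X.faces)

lemma card_T_le (X : SC n) (k : ℕ) (σ : X.face (k+1)) :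
    (Tset X k σ).card ≤ ∑ j ∈ Finset.range (k+2), j * (X.dset σ.1 j).card := by
  classical
  set pairs := (Aset X σ.1).sigma
      (fun u => σ.1.filter (fun w => X.vLk u (σ.1.erase w))) with hp
  have hcard : (Tset X k σ).card ≤ pairs.card := by
    have h1 : (Tset X k σ).card = ((Tset X k σ).image Subtype.val).card :=
      (Finset.card_image_of_injective _ Subtype.val_injective).symm
    rw [h1]
    refine le_trans (Finset.card_le_card (t := pairs.image
      (fun p => insert p.1 (σ.1.erase p.2))) ?_) Finset.card_image_le
    intro t ht
    simp only [Finset.mem_image] at ht ⊢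
    obtain ⟨τ, hτT, rfl⟩ := ht
    rw [Tset, Finset.mem_filter] at hτT
    obtain ⟨-, hne, hint, hnu, hsym⟩ := hτT
    have hσc : σ.1.card = k + 1 := σ.2.2
    have hτc : τ.1.card = k + 1 := τ.2.2
    have hst : (σ.1 \ τ.1).card = 1 := by
      have := Finset.card_sdiff_add_card_inter σ.1 τ.1
      omega
    have hts : (τ.1 \ σ.1).card = 1 := by
      have h := Finset.card_sdiff_add_card_inter τ.1 σ.1
      rw [Finset.inter_comm] at h
      omega
    obtain ⟨u, hu⟩ := Finset.card_eq_one.1 hts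
    obtain ⟨w, hw⟩ := Finset.card_eq_one.1 hst
    have humem : u ∈ τ.1 \ σ.1 := by rw [hu]; exact Finset.mem_singleton_self u
    have hwmem : w ∈ σ.1 \ τ.1 := by rw [hw]; exact Finset.mem_singleton_self w
    obtain ⟨huτ, huσ⟩ := Finset.mem_sdiff.1 humem
    obtain ⟨hwσ, hwτ⟩ := Finset.mem_sdiff.1 hwmem
    have hins : insert u σ.1 = σ.1 ∪ τ.1 := by
      ext x
      simp only [Finset.mem_insert, Finset.mem_union]
      constructor
      · rintro (rfl | hx)
        · exact Or.inr huτ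
        · exact Or.inl hx
      · rintro (hx | hx)
        · exact Or.inr hx
        · by_cases hxσ : x ∈ σ.1
          · exact Or.inr hxσ
          · left
            have hmem : x ∈ τ.1 \ σ.1 := Finset.mem_sdiff.2 ⟨hx, hxσ⟩
            rw [hu] at hmem
            exact Finset.mem_singleton.1 hmem
    have hins2 : insert u (σ.1.erase w) = τ.1 := by
      ext x
      simp only [Finset.mem_insert, Finset.mem_erase]
      constructor
      · rintro (rfl | ⟨hxw, hxσ⟩)
        · exact huτ
        · by_contra hxτ
          have hmem : x ∈ σ.1 \ τ.1 := Finset.mem_sdiff.2 ⟨hxσ, hxτ⟩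
          rw [hw] at hmem
          exact hxw (Finset.mem_singleton.1 hmem)
      · intro hxτ
        by_cases hxσ : x ∈ σ.1
        · exact Or.inr ⟨fun hxw => hwτ (hxw ▸ hxτ), hxσ⟩
        · left
          have hmem : x ∈ τ.1 \ σ.1 := Finset.mem_sdiff.2 ⟨hxτ, hxσ⟩
          rw [hu] at hmem
          exact Finset.mem_singleton.1 hmem
    refine ⟨⟨u, w⟩, ?_, hins2⟩
    rw [hp, Finset.mem_sigma]
    constructor
    · rw [Aset, Finset.mem_filter]
      refine ⟨Finset.mem_univ _, ?_, ?_⟩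
      · rintro ⟨-, hmem⟩
        rw [hins] at hmem
        exact hnu hmem
      · intro v hv
        have hneuv : u ≠ v := fun h => huσ (h ▸ hv)
        refine ⟨by simp [hneuv], ?_⟩
        by_cases hvw : v = w
        · subst hvw
          rw [hw, hu] at hsym
          have heq : (insert u {v} : Finset (Fin n)) = {v} ∪ {u} := by ext x; simp [or_comm]
          rwa [heq]
        · have hvτ : v ∈ τ.1 := by
            by_contra hvτ
            have hmem : v ∈ σ.1 \ τ.1 := Finset.mem_sdiff.2 ⟨hv, hvτ⟩
            rw [hw] at hmem
            exact hvw (Finset.mem_singleton.1 hmem)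
          exact X.down_closed τ.2.1 (Finset.insert_subset huτ (by simpa using hvτ))
    · rw [Finset.mem_filter]
      refine ⟨hwσ, fun h => huσ (Finset.mem_of_mem_erase h), ?_⟩
      rw [hins2]
      exact τ.2.1
  have hpc : pairs.card = ∑ j ∈ Finset.range (k+2), j * (X.dset σ.1 j).card := by
    rw [hp, Finset.card_sigma, sum_j X σ.2.2]
  omega

lemma abs_P_le (X : SC n) (k : ℕ) (σ τ : X.face (k+1)) (hne : τ ≠ σ) :
    |Pmat X k σ τ| ≤ if τ ∈ Tset X k σ then (1 : ℝ) else 0 := by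
  simp only [Pmat, Matrix.of_apply, if_neg (Ne.symm hne)]
  by_cases hc : (σ.1 ∩ τ.1).card = k ∧ σ.1 ∪ τ.1 ∉ X.faces ∧
      (σ.1 \ τ.1) ∪ (τ.1 \ σ.1) ∈ X.faces
  · rw [if_pos hc]
    have hT : τ ∈ Tset X k σ := Finset.mem_filter.2 ⟨Finset.mem_univ _, hne, hc⟩
    rw [if_pos hT, abs_neg, abs_mul]
    have h1 : (σ.1 \ (σ.1 ∩ τ.1)).card = 1 := by
      have h2 := Finset.card_sdiff_add_card_inter σ.1 (σ.1 ∩ τ.1)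
      have h3 : σ.1 ∩ (σ.1 ∩ τ.1) = σ.1 ∩ τ.1 := by
        rw [← Finset.inter_assoc, Finset.inter_self]
      rw [h3] at h2
      have := σ.2.2
      omega
    have h1' : (τ.1 \ (σ.1 ∩ τ.1)).card = 1 := by
      have h2 := Finset.card_sdiff_add_card_inter τ.1 (σ.1 ∩ τ.1)
      have h3 : τ.1 ∩ (σ.1 ∩ τ.1) = σ.1 ∩ τ.1 := by
        rw [Finset.inter_comm σ.1 τ.1, ← Finset.inter_assoc, Finset.inter_self,
          Finset.inter_comm]
      rw [h3] at h2
      have := τ.2.2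
      omega
    rw [abs_iSgn h1, abs_iSgn h1', mul_one]
  · rw [if_neg hc, abs_zero]
    split <;> norm_num

lemma key (X : SC n) (k : ℕ) (σ : X.face (k+1)) :
    Pmat X k σ σ + ∑ τ ∈ Finset.univ.erase σ, |Pmat X k σ τ|
      ≤ (k : ℝ) * n + (maxD X k : ℝ) := by
  classical
  have hdiag : Pmat X k σ σ = (∑ v ∈ σ.1, (X.gdeg v : ℝ)) - (X.fdeg σ.1 : ℝ) := by
    simp [Pmat]
  have hsum : ∑ τ ∈ Finset.univ.erase σ, |Pmat X k σ τ| ≤ ((Tset X k σ).card : ℝ) := by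
    calc ∑ τ ∈ Finset.univ.erase σ, |Pmat X k σ τ|
        ≤ ∑ τ ∈ Finset.univ.erase σ, (if τ ∈ Tset X k σ then (1:ℝ) else 0) :=
          Finset.sum_le_sum fun τ hτ => abs_P_le X k σ τ (Finset.ne_of_mem_erase hτ)
      _ = ∑ τ ∈ (Finset.univ.erase σ).filter (· ∈ Tset X k σ), (1:ℝ) :=
          (Finset.sum_filter _ _).symm
      _ = (((Finset.univ.erase σ).filter (· ∈ Tset X k σ)).card : ℝ) := by
          rw [Finset.sum_const, nsmul_eq_mul, mul_one]
      _ ≤ ((Tset X k σ).card : ℝ) := by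
          have : ((Finset.univ.erase σ).filter (· ∈ Tset X k σ)) ⊆ Tset X k σ := by
            intro τ hτ
            exact (Finset.mem_filter.1 hτ).2
          exact_mod_cast Finset.card_le_card this
  have h1 := sum_gdeg_le X σ.2.2 (k := k)
  have h2 := card_lk_le_fdeg X σ.1
  have h3 := card_T_le X k σ
  have h4 := card_Aset X σ.2.2 (k := k)
  have h5 : ∑ j ∈ Finset.range (k+2), (j+1) * (X.dset σ.1 j).card ≤ maxD X k :=
    Finset.le_sup (f := fun σ : X.face (k+1) =>
      ∑ j ∈ Finset.range (k+2), (j+1) * (X.dset σ.1 j).card) (Finset.mem_univ σ)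
  have h6 : ∑ j ∈ Finset.range (k+2), (j+1) * (X.dset σ.1 j).card
      = ∑ j ∈ Finset.range (k+2), j * (X.dset σ.1 j).card
        + ∑ j ∈ Finset.range (k+2), (X.dset σ.1 j).card := by
    rw [← Finset.sum_add_distrib]
    exact Finset.sum_congr rfl fun j _ => by ring
  have hN : ∑ v ∈ σ.1, X.gdeg v + (Tset X k σ).card ≤ k * n + X.fdeg σ.1 + maxD X k := by
    omega
  have hNR : ((∑ v ∈ σ.1, X.gdeg v : ℕ) : ℝ) + ((Tset X k σ).card : ℝ)
      ≤ (k : ℝ) * n + (X.fdeg σ.1 : ℝ) + (maxD X k : ℝ) := by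
    exact_mod_cast hN
  have hgd : (∑ v ∈ σ.1, (X.gdeg v : ℝ)) = ((∑ v ∈ σ.1, X.gdeg v : ℕ) : ℝ) := by
    push_cast
    rfl
  rw [hdiag, hgd]
  linarith

end Stmt5Aux

/-- Every eigenvalue of the matrix `P` is at most
`kn + max_{σ ∈ X(k)} ∑_{j=0}^{k+1} (j+1)|σ[j]|`. -/
theorem stmt5 (n k : ℕ) (X : SC n) (hfull : ∀ v : Fin n, {v} ∈ X.faces)
    (μ : ℝ) (hμ : μ ∈ spectrum ℝ (Pmat X k)) :
    μ ≤ (k : ℝ) * n + (maxD X k : ℝ) := by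
  classical
  have heig := Stmt5Aux.spec_to_eig hμ
  obtain ⟨σ, hball⟩ := eigenvalue_mem_ball heig
  rw [Metric.mem_closedBall, Real.dist_eq] at hball
  have h1 : μ - Pmat X k σ σ ≤ ∑ τ ∈ Finset.univ.erase σ, ‖Pmat X k σ τ‖ :=
    (abs_le.1 hball).2
  simp_rw [Real.norm_eq_abs] at h1
  have h2 := Stmt5Aux.key X k σ
  linarith
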